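/- Let A be a symmetric n×n real matrix with λ_max(A) ≤ C₁, λ_min(A) ≥ 1/C₁, and ‖A⁻¹‖_{∞,1} ≤ C₁ for some constant C₁ ≥ 1, where ‖M‖_{∞,1} = max_i Σ_j |M_{ij}|. For any index k, let B be the principal submatrix of A obtained by deleting row and column k. Then B is invertible and ‖B⁻¹‖_{∞,1} ≤ C for some constant C depending only on C₁ (one may take C = C₁(1 + C₁(C₁ + C₁³))). -/

import Mathlib

open Finset Matrix

/-- Let `A` be a symmetric matrix with `λ_max(A) ≤ C₁`, `λ_min(A) ≥ 1/C₁`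
(phrased via quadratic form bounds), and maximum absolute row sum of `A⁻¹`
at most `C₁`, for some `C₁ ≥ 1`.  Then the principal submatrix `B` obtained
by deleting row and column `k` is invertible, and the maximum absolute row
sum of `B⁻¹` is at most `C = C₁(1 + C₁(C₁ + C₁³))`. -/
theorem stmt_0 {n : ℕ} (A : Matrix (Fin (n + 1)) (Fin (n + 1)) ℝ)
    (C₁ : ℝ) (hC₁ : 1 ≤ C₁) (hSym : A.IsSymm)
    (hmax : ∀ x : Fin (n + 1) → ℝ, x ⬝ᵥ (A *ᵥ x) ≤ C₁ * (x ⬝ᵥ x))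
    (hmin : ∀ x : Fin (n + 1) → ℝ, (1 / C₁) * (x ⬝ᵥ x) ≤ x ⬝ᵥ (A *ᵥ x))
    (hinv : ∀ i, ∑ j, |A⁻¹ i j| ≤ C₁)
    (k : Fin (n + 1))
    (B : Matrix (Fin n) (Fin n) ℝ)
    (hB : B = A.submatrix k.succAbove k.succAbove) :
    IsUnit B.det ∧ ∀ i, ∑ j, |B⁻¹ i j| ≤ C₁ * (1 + C₁ * (C₁ + C₁ ^ 3)) := by
  have hC₁pos : (0:ℝ) < C₁ := by linarith
  -- A is positive definite
  have hPD : A.PosDef := by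
    refine PosDef.of_dotProduct_mulVec_pos ?_ ?_
    · ext i j
      simp only [conjTranspose_apply, star_trivial]
      exact hSym.apply i j
    · intro x hx
      have h1 := hmin x
      have hnn : 0 ≤ x ⬝ᵥ x :=
        Finset.sum_nonneg fun p _ => mul_self_nonneg (x p)
      have h2 : 0 < x ⬝ᵥ x := by
        rcases lt_or_eq_of_le hnn with h | h
        · exact h
        · exact absurd (dotProduct_self_eq_zero.mp h.symm) hx
      simp only [star_trivial]
      calc (0:ℝ) < (1 / C₁) * (x ⬝ᵥ x) := by positivity
        _ ≤ x ⬝ᵥ (A *ᵥ x) := h1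
  have hAdet : IsUnit A.det := hPD.det_pos.ne'.isUnit
  set M := A⁻¹ with hM
  have hAM : A * M = 1 := Matrix.mul_nonsing_inv A hAdet
  -- symmetry of quadratic form
  have hsymq : ∀ v w : Fin (n+1) → ℝ, v ⬝ᵥ (A *ᵥ w) = w ⬝ᵥ (A *ᵥ v) := by
    intro v w
    simp only [dotProduct, mulVec, dotProduct, Finset.mul_sum]
    rw [Finset.sum_comm]
    refine Finset.sum_congr rfl fun j _ => Finset.sum_congr rfl fun i _ => ?_
    have h := hSym.apply i j
    rw [← h]; ring
  -- the vector y = column k of M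
  set y : Fin (n+1) → ℝ := fun p => M p k with hy
  set e : Fin (n+1) → ℝ := fun p => if p = k then 1 else 0 with he
  have hAy : A *ᵥ y = e := by
    funext p
    have : (A *ᵥ y) p = (A * M) p k := by
      simp [mulVec, dotProduct, Matrix.mul_apply, hy]
    rw [this, hAM]
    simp [Matrix.one_apply, he]
  have hev : ∀ v : Fin (n+1) → ℝ, e ⬝ᵥ v = v k := by
    intro v; simp [dotProduct, he]
  have hve : ∀ v : Fin (n+1) → ℝ, v ⬝ᵥ e = v k := by
    intro v; simp [dotProduct, he]
  have hee : e ⬝ᵥ e = 1 := by rw [hev]; simp [he]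
  have hAkk : e ⬝ᵥ (A *ᵥ e) ≤ C₁ := by
    have := hmax e; rwa [hee, mul_one] at this
  -- lower bound on M k k
  have hMkk : 1 / C₁ ≤ M k k := by
    set t : ℝ := 1 / C₁ with ht
    set z : Fin (n+1) → ℝ := y - t • e with hz
    have h0 : 0 ≤ z ⬝ᵥ (A *ᵥ z) := by
      refine le_trans ?_ (hmin z)
      have hnn : 0 ≤ z ⬝ᵥ z :=
        Finset.sum_nonneg fun p _ => mul_self_nonneg (z p)
      positivity
    have hexp : z ⬝ᵥ (A *ᵥ z) =
        y ⬝ᵥ (A *ᵥ y) - t * (e ⬝ᵥ (A *ᵥ y)) - t * (y ⬝ᵥ (A *ᵥ e))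
          + t * t * (e ⬝ᵥ (A *ᵥ e)) := by
      rw [hz, Matrix.mulVec_sub, Matrix.mulVec_smul, sub_dotProduct,
        dotProduct_sub, dotProduct_sub, smul_dotProduct, dotProduct_smul,
        dotProduct_smul]
      simp [smul_eq_mul]; ring
    have h1 : y ⬝ᵥ (A *ᵥ y) = M k k := by rw [hAy, hve]
    have h2 : e ⬝ᵥ (A *ᵥ y) = 1 := by rw [hAy, hee]
    have h3 : y ⬝ᵥ (A *ᵥ e) = 1 := by rw [hsymq, h2]
    rw [hexp, h1, h2, h3] at h0
    have hdpos : 0 < t := by rw [ht]; positivity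
    have hd : t * C₁ = 1 := by rw [ht]; field_simp
    have hdd : t * t * (e ⬝ᵥ (A *ᵥ e)) ≤ t * t * C₁ :=
      mul_le_mul_of_nonneg_left hAkk (by positivity)
    have hddC : t * t * C₁ = t := by
      rw [mul_assoc, hd, mul_one]
    show t ≤ M k k
    nlinarith [h0, hdd, hddC]
  have hMkkpos : 0 < M k k := lt_of_lt_of_le (by positivity) hMkk
  have hMkkne : M k k ≠ 0 := ne_of_gt hMkkpos
  set σ : Fin n → Fin (n+1) := k.succAbove with hσ
  have hσne : ∀ l, σ l ≠ k := fun l => Fin.succAbove_ne k l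
  have hσinj : Function.Injective σ := Fin.succAbove_right_injective
  -- the candidate inverse
  set N : Matrix (Fin n) (Fin n) ℝ :=
    fun i j => M (σ i) (σ j) - M (σ i) k * M k (σ j) / M k k with hN
  have hBN : B * N = 1 := by
    ext i j
    have full1 : (A * M) (σ i) (σ j)
        = A (σ i) k * M k (σ j) + ∑ l, A (σ i) (σ l) * M (σ l) (σ j) := by
      rw [Matrix.mul_apply]
      exact Fin.sum_univ_succAbove (fun p => A (σ i) p * M p (σ j)) k
    have full2 : (A * M) (σ i) k
        = A (σ i) k * M k k + ∑ l, A (σ i) (σ l) * M (σ l) k := by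
      rw [Matrix.mul_apply]
      exact Fin.sum_univ_succAbove (fun p => A (σ i) p * M p k) k
    rw [hAM] at full1 full2
    have e1 : ((1 : Matrix (Fin (n+1)) (Fin (n+1)) ℝ)) (σ i) (σ j)
        = if i = j then (1:ℝ) else 0 := by
      simp [Matrix.one_apply, hσinj.eq_iff]
    have e2 : ((1 : Matrix (Fin (n+1)) (Fin (n+1)) ℝ)) (σ i) k = 0 := by
      simp [Matrix.one_apply, hσne i]
    rw [e1] at full1
    rw [e2] at full2
    have hsum1 : ∑ l, A (σ i) (σ l) * M (σ l) (σ j)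
        = (if i = j then (1:ℝ) else 0) - A (σ i) k * M k (σ j) := by linarith
    have hsum2 : ∑ l, A (σ i) (σ l) * M (σ l) k = -(A (σ i) k * M k k) := by
      linarith
    have expand : (B * N) i j
        = (∑ l, A (σ i) (σ l) * M (σ l) (σ j))
          - (∑ l, A (σ i) (σ l) * M (σ l) k) * (M k (σ j) / M k k) := by
      rw [Matrix.mul_apply, Finset.sum_mul, ← Finset.sum_sub_distrib]
      refine Finset.sum_congr rfl fun l _ => ?_
      rw [hB]
      simp only [hN, Matrix.submatrix_apply]
      ring
    rw [expand, hsum1, hsum2]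
    have : -(A (σ i) k * M k k) * (M k (σ j) / M k k)
        = -(A (σ i) k * M k (σ j)) := by
      field_simp
    rw [this, Matrix.one_apply]
    split <;> ring
  have hdet : IsUnit B.det := by
    have : B.det * N.det = 1 := by rw [← Matrix.det_mul, hBN, Matrix.det_one]
    exact IsUnit.of_mul_eq_one _ this
  refine ⟨hdet, ?_⟩
  have hBinv : B⁻¹ = N := Matrix.inv_eq_right_inv hBN
  intro i
  rw [hBinv]
  -- row sums of M
  have hrow : ∀ p : Fin (n+1), ∑ j : Fin n, |M p (σ j)| ≤ C₁ := by
    intro p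
    have hfull : ∑ q, |M p q| = |M p k| + ∑ j : Fin n, |M p (σ j)| :=
      Fin.sum_univ_succAbove (fun q => |M p q|) k
    have := hinv p
    rw [hfull] at this
    have := abs_nonneg (M p k)
    linarith
  have hent : |M (σ i) k| ≤ C₁ := by
    have hfull : ∑ q, |M (σ i) q| = |M (σ i) k| + ∑ j : Fin n, |M (σ i) (σ j)| :=
      Fin.sum_univ_succAbove (fun q => |M (σ i) q|) k
    have h1 := hinv (σ i)
    rw [hfull] at h1
    have h2 : 0 ≤ ∑ j : Fin n, |M (σ i) (σ j)| :=
      Finset.sum_nonneg fun j _ => abs_nonneg _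
    linarith
  have hinvMkk : 1 / M k k ≤ C₁ := by
    rw [div_le_iff₀ hMkkpos]
    calc (1:ℝ) = C₁ * (1/C₁) := by field_simp
      _ ≤ C₁ * M k k := by
        apply mul_le_mul_of_nonneg_left hMkk (le_of_lt hC₁pos)
  have step1 : ∑ j, |N i j|
      ≤ (∑ j : Fin n, |M (σ i) (σ j)|)
        + |M (σ i) k| * (∑ j : Fin n, |M k (σ j)|) * (1 / M k k) := by
    rw [Finset.mul_sum, Finset.sum_mul, ← Finset.sum_add_distrib]
    refine Finset.sum_le_sum fun j _ => ?_
    have habs : |N i j| ≤ |M (σ i) (σ j)| + |M (σ i) k * M k (σ j) / M k k| := by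
      simp only [hN]
      exact abs_sub _ _
    refine le_trans habs ?_
    have : |M (σ i) k * M k (σ j) / M k k|
        = |M (σ i) k| * |M k (σ j)| * (1 / M k k) := by
      rw [abs_div, abs_mul, abs_of_pos hMkkpos]
      ring
    rw [this]
  refine le_trans step1 ?_
  have h1 : ∑ j : Fin n, |M (σ i) (σ j)| ≤ C₁ := hrow (σ i)
  have h2 : ∑ j : Fin n, |M k (σ j)| ≤ C₁ := hrow k
  have h3 : 0 ≤ |M (σ i) k| := abs_nonneg _
  have h4 : 0 ≤ 1 / M k k := by positivity
  have h5 : 0 ≤ ∑ j : Fin n, |M k (σ j)| :=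
    Finset.sum_nonneg fun j _ => abs_nonneg _
  have key : |M (σ i) k| * (∑ j : Fin n, |M k (σ j)|) * (1 / M k k)
      ≤ C₁ * C₁ * C₁ := by
    have s1 : |M (σ i) k| * (∑ j : Fin n, |M k (σ j)|) ≤ C₁ * C₁ :=
      mul_le_mul hent h2 h5 (le_of_lt hC₁pos)
    calc |M (σ i) k| * (∑ j : Fin n, |M k (σ j)|) * (1 / M k k)
        ≤ C₁ * C₁ * (1 / M k k) := by
          apply mul_le_mul_of_nonneg_right s1 h4
      _ ≤ C₁ * C₁ * C₁ := by
          apply mul_le_mul_of_nonneg_left hinvMkk (by positivity)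
  have h6 : (0:ℝ) ≤ C₁ ^ 5 := by positivity
  have hgoal : C₁ * (1 + C₁ * (C₁ + C₁ ^ 3)) = C₁ + C₁ ^ 3 + C₁ ^ 5 := by ring
  have key' : |M (σ i) k| * (∑ j : Fin n, |M k (σ j)|) * (1 / M k k) ≤ C₁ ^ 3 := by
    calc |M (σ i) k| * (∑ j : Fin n, |M k (σ j)|) * (1 / M k k)
        ≤ C₁ * C₁ * C₁ := key
      _ = C₁ ^ 3 := by ring
  rw [hgoal]
  linarith [step1, h1, key', h6]
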